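/- For j ∈ ℕ and ζ in the closed unit disk, the operator (g_{j,ζ} u)(z) = j^{-1/2} u(ζ + z^j) (with z^j the j-th complex power) is a linear isometry from H^1_0(Ω) to H^1_0(B) with respect to the gradient L^2 norm, whenever Ω ⊂ B_{1/2} is such that ζ + z^j ranges within the domain of the zero-extended u; i.e., ‖∇(g_{j,ζ}u)‖_{L^2(B)} = ‖∇u‖_{L^2(Ω)}. -/

import Mathlib

open MeasureTheory Metric Set

/-- Multiplication by `c : ℂ` as a real-linear continuous map. -/
noncomputable def mulC (c : ℂ) : ℂ →L[ℝ] ℂ :=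
  ((1 : ℂ →L[ℂ] ℂ).smulRight c).restrictScalars ℝ

lemma mulC_apply (c w : ℂ) : mulC c w = w * c := by
  simp [mulC, smul_eq_mul]

lemma norm_comp_mulC (T : ℂ →L[ℝ] ℝ) (c : ℂ) : ‖T.comp (mulC c)‖ = ‖T‖ * ‖c‖ := by
  have key : ∀ (d : ℂ) (S : ℂ →L[ℝ] ℝ), ‖S.comp (mulC d)‖ ≤ ‖S‖ * ‖d‖ := by
    intro d S
    refine ContinuousLinearMap.opNorm_le_bound _ (by positivity) fun w => ?_
    rw [ContinuousLinearMap.comp_apply, mulC_apply]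
    calc ‖S (w * d)‖ ≤ ‖S‖ * ‖w * d‖ := S.le_opNorm _
      _ = ‖S‖ * ‖d‖ * ‖w‖ := by rw [norm_mul]; ring
  refine le_antisymm (key c T) ?_
  by_cases hc : c = 0
  · have : T.comp (mulC 0) = 0 := by ext w; simp [mulC_apply]
    simp [hc, this]
  · have h2 : (T.comp (mulC c)).comp (mulC c⁻¹) = T := by
      ext w
      simp [mulC_apply, mul_assoc, inv_mul_cancel₀ hc]
    have h3 := key c⁻¹ (T.comp (mulC c))
    rw [h2, norm_inv] at h3
    have hc' : (0:ℝ) < ‖c‖ := norm_pos_iff.mpr hc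
    calc ‖T‖ * ‖c‖ ≤ ‖T.comp (mulC c)‖ * ‖c‖⁻¹ * ‖c‖ :=
          mul_le_mul_of_nonneg_right h3 hc'.le
      _ = ‖T.comp (mulC c)‖ := by field_simp

lemma periodic_avg (j : ℕ) (hj : 1 ≤ j) (f : ℂ → ℝ) (hf : Continuous f) (ρ : ℝ) :
    (∫ θ in (-Real.pi)..Real.pi, f ((ρ:ℂ) * Complex.exp ((((j:ℝ) * θ : ℝ)) * Complex.I)))
      = ∫ θ in (-Real.pi)..Real.pi, f ((ρ:ℂ) * Complex.exp ((θ:ℝ) * Complex.I)) := by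
  set F : ℝ → ℝ := fun θ => f ((ρ:ℂ) * Complex.exp ((θ:ℝ) * Complex.I)) with hF
  have hFc : Continuous F := by
    apply hf.comp
    exact continuous_const.mul (Complex.continuous_exp.comp
      ((Complex.continuous_ofReal.comp continuous_id).mul continuous_const))
  have hper : Function.Periodic F (2 * Real.pi) := by
    intro θ
    have harg : (((θ + 2 * Real.pi : ℝ)) : ℂ) * Complex.I
        = (θ:ℂ) * Complex.I + 2 * Real.pi * Complex.I := by push_cast; ring
    simp only [hF, harg, Complex.exp_add, Complex.exp_two_pi_mul_I, mul_one]
  have h_int : ∀ t₁ t₂, IntervalIntegrable F MeasureTheory.volume t₁ t₂ :=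
    fun t₁ t₂ => hFc.intervalIntegrable _ _
  have hj0 : (j:ℝ) ≠ 0 := Nat.cast_ne_zero.mpr (by omega)
  have step1 : (∫ θ in (-Real.pi)..Real.pi, F ((j:ℝ) * θ))
      = (j:ℝ)⁻¹ • ∫ φ in ((j:ℝ) * (-Real.pi))..((j:ℝ) * Real.pi), F φ :=
    intervalIntegral.integral_comp_mul_left F hj0
  have step2 : (∫ φ in ((j:ℝ) * (-Real.pi))..((j:ℝ) * Real.pi), F φ)
      = (j:ℤ) • ∫ φ in (-Real.pi)..Real.pi, F φ := by
    have h1 : ((j:ℝ) * Real.pi) = (j:ℝ) * (-Real.pi) + (j:ℤ) • (2 * Real.pi) := by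
      rw [zsmul_eq_mul]; push_cast; ring
    rw [h1, hper.intervalIntegral_add_zsmul_eq (j:ℤ) _ h_int,
      hper.intervalIntegral_add_eq _ (-Real.pi)]
    have h2 : -Real.pi + 2 * Real.pi = Real.pi := by ring
    rw [h2]
  have : (∫ θ in (-Real.pi)..Real.pi, F ((j:ℝ) * θ)) = ∫ φ in (-Real.pi)..Real.pi, F φ := by
    rw [step1, step2, zsmul_eq_mul, smul_eq_mul]
    push_cast
    rw [← mul_assoc, inv_mul_cancel₀ hj0, one_mul]
  exact this

lemma polar_pow_integral (j : ℕ) (hj : 1 ≤ j) (f : ℂ → ℝ) (hf : Continuous f)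
    (hsupp : ∀ z : ℂ, 1 ≤ ‖z‖ → f z = 0) :
    (∫ z in ball (0:ℂ) 1, (j:ℝ) * ‖z‖ ^ (2*(j-1)) * f (z ^ j))
      = ∫ t in (0:ℝ)..1, t * ∫ θ in (-Real.pi)..Real.pi,
          f ((t:ℂ) * Complex.exp ((θ:ℝ) * Complex.I)) := by
  obtain ⟨m, rfl⟩ : ∃ m, j = m + 1 := ⟨j - 1, (Nat.succ_pred_eq_of_pos hj).symm⟩
  set j := m + 1 with hjdef
  have hjm : j - 1 = m := rfl
  -- the function K
  set K : ℝ → ℝ := fun s => ∫ θ in (-Real.pi)..Real.pi,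
      f ((s:ℂ) * Complex.exp ((θ:ℝ) * Complex.I)) with hK
  have hKc : Continuous K := by
    apply intervalIntegral.continuous_parametric_intervalIntegral_of_continuous'
    apply hf.comp
    apply Continuous.mul
    · exact Complex.continuous_ofReal.comp continuous_fst
    · exact Complex.continuous_exp.comp
        ((Complex.continuous_ofReal.comp continuous_snd).mul continuous_const)
  -- the integrand and its indicator extension
  set g : ℂ → ℝ := fun z => (j:ℝ) * ‖z‖ ^ (2*(j-1)) * f (z ^ j) with hgdef
  have hgc : Continuous g := by
    exact (continuous_const.mul ((continuous_norm).pow _)).mul (hf.comp (continuous_pow j))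
  set G : ℂ → ℝ := (ball (0:ℂ) 1).indicator g with hG
  have hGmeas : Measurable G := hgc.measurable.indicator measurableSet_ball
  have hGz : ∀ z : ℂ, 1 ≤ ‖z‖ → G z = 0 := by
    intro z hz
    apply indicator_of_notMem
    rw [mem_ball_zero_iff]; exact not_lt.mpr hz
  -- bound for G
  obtain ⟨Cf, hCf⟩ : ∃ C, ∀ x, ‖f x‖ ≤ C := by
    have hfc : HasCompactSupport f := by
      apply HasCompactSupport.intro (isCompact_closedBall (0:ℂ) 1)
      intro x hx
      exact hsupp x (le_of_lt (by simpa [mem_closedBall, dist_zero_right, not_le] using hx))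
    exact hfc.exists_bound_of_continuous hf
  have hCf0 : 0 ≤ Cf := le_trans (norm_nonneg _) (hCf 0)
  have hGbd : ∀ z : ℂ, ‖G z‖ ≤ (j:ℝ) * Cf := by
    intro z
    by_cases hz : z ∈ ball (0:ℂ) 1
    · rw [hG, indicator_of_mem hz, hgdef]
      have h1 : ‖z‖ ^ (2*(j-1)) ≤ 1 := pow_le_one₀ (norm_nonneg z) (mem_ball_zero_iff.mp hz).le
      calc ‖(j:ℝ) * ‖z‖ ^ (2*(j-1)) * f (z ^ j)‖
          = (j:ℝ) * ‖z‖ ^ (2*(j-1)) * ‖f (z ^ j)‖ := by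
            rw [norm_mul, norm_mul, Real.norm_natCast,
              Real.norm_of_nonneg (pow_nonneg (norm_nonneg z) _)]
        _ ≤ (j:ℝ) * 1 * Cf := by
            apply mul_le_mul (by apply mul_le_mul le_rfl h1 (by positivity) (by positivity))
              (hCf _) (norm_nonneg _) (by positivity)
        _ = (j:ℝ) * Cf := by ring
    · rw [hG, indicator_of_notMem hz]
      simp; positivity
  -- the polar map
  set ψ : ℝ × ℝ → ℂ := fun p => (p.1 : ℂ) * Complex.exp ((p.2:ℝ) * Complex.I) with hψdef
  have hψ : ∀ p : ℝ × ℝ, Complex.polarCoord.symm p = ψ p := by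
    intro p
    simp only [hψdef]
    rw [Complex.polarCoord_symm_apply, Complex.exp_mul_I, Complex.ofReal_cos,
      Complex.ofReal_sin]
  have hψc : Continuous ψ := by
    exact (Complex.continuous_ofReal.comp continuous_fst).mul
      (Complex.continuous_exp.comp
        ((Complex.continuous_ofReal.comp continuous_snd).mul continuous_const))
  have hψnorm : ∀ p : ℝ × ℝ, ‖ψ p‖ = |p.1| := by
    intro p
    rw [hψdef]
    simp only [norm_mul, Complex.norm_real, Real.norm_eq_abs]
    rw [Complex.norm_exp_ofReal_mul_I, mul_one]
  -- integrability on the polar target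
  set F : ℝ × ℝ → ℝ := fun p => p.1 • G (ψ p) with hFdef
  have hFmeas : Measurable F := measurable_fst.smul (hGmeas.comp hψc.measurable)
  set Q : Set (ℝ × ℝ) := Ioo (0:ℝ) 1 ×ˢ Ioo (-Real.pi) Real.pi with hQdef
  have hQmeas : MeasurableSet Q := (measurableSet_Ioo).prod measurableSet_Ioo
  have hIntQ : IntegrableOn F Q := by
    apply Measure.integrableOn_of_bounded (M := (j:ℝ) * Cf)
    · rw [hQdef, Measure.volume_eq_prod, Measure.prod_prod]
      simp only [Real.volume_Ioo]
      exact (ENNReal.mul_lt_top ENNReal.ofReal_lt_top ENNReal.ofReal_lt_top).ne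
    · exact hFmeas.aestronglyMeasurable
    · filter_upwards [ae_restrict_mem hQmeas] with p hp
      rw [hFdef]
      simp only [smul_eq_mul, norm_mul, Real.norm_eq_abs]
      calc |p.1| * ‖G (ψ p)‖ ≤ 1 * ((j:ℝ) * Cf) := by
            apply mul_le_mul _ (hGbd _) (norm_nonneg _) zero_le_one
            rw [abs_of_pos hp.1.1]
            exact hp.1.2.le
        _ = (j:ℝ) * Cf := one_mul _
  have hIntT : IntegrableOn F (Ioi (0:ℝ) ×ˢ Ioo (-Real.pi) Real.pi) := by
    have hmeas2 : MeasurableSet ((Ioi (0:ℝ) ×ˢ Ioo (-Real.pi) Real.pi) \ Q) :=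
      (measurableSet_Ioi.prod measurableSet_Ioo).diff hQmeas
    have hzero : EqOn F 0 ((Ioi (0:ℝ) ×ˢ Ioo (-Real.pi) Real.pi) \ Q) := by
      intro p hp
      obtain ⟨⟨hp1, hp2⟩, hnot⟩ := hp
      have h1 : (1:ℝ) ≤ p.1 := by
        by_contra h
        push_neg at h
        exact hnot ⟨⟨hp1, h⟩, hp2⟩
      have : G (ψ p) = 0 := by
        apply hGz
        rw [hψnorm, abs_of_pos hp1]
        exact h1
      simp [hFdef, this]
    have h2 : IntegrableOn F ((Ioi (0:ℝ) ×ˢ Ioo (-Real.pi) Real.pi) \ Q) := by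
      rw [integrableOn_congr_fun hzero hmeas2]
      exact integrableOn_zero
    apply (hIntQ.union h2).mono_set
    intro p hp
    by_cases hpQ : p ∈ Q
    · exact Or.inl hpQ
    · exact Or.inr ⟨hp, hpQ⟩
  -- main computation
  calc (∫ z in ball (0:ℂ) 1, (j:ℝ) * ‖z‖ ^ (2*(j-1)) * f (z ^ j))
      = ∫ z, G z := (integral_indicator measurableSet_ball).symm
    _ = ∫ p in Complex.polarCoord.target, p.1 • G (Complex.polarCoord.symm p) :=
        (Complex.integral_comp_polarCoord_symm G).symm
    _ = ∫ p in Ioi (0:ℝ) ×ˢ Ioo (-Real.pi) Real.pi, F p := by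
        rw [Complex.polarCoord_target]
        apply setIntegral_congr_fun (measurableSet_Ioi.prod measurableSet_Ioo)
        intro p _
        exact congrArg (fun t => p.1 • G t) (hψ p)
    _ = ∫ r in Ioi (0:ℝ), ∫ θ in Ioo (-Real.pi) Real.pi, F (r, θ) := by
        have h := setIntegral_prod (μ := (volume : Measure ℝ)) (ν := (volume : Measure ℝ))
          F (s := Ioi (0:ℝ)) (t := Ioo (-Real.pi) Real.pi) ?hint
        case hint => rw [← Measure.volume_eq_prod]; exact hIntT
        rw [← Measure.volume_eq_prod] at h
        exact h
    _ = ∫ r in Ioo (0:ℝ) 1, ∫ θ in Ioo (-Real.pi) Real.pi, F (r, θ) := by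
        have hsplit : Ioo (0:ℝ) 1 ∪ Ici 1 = Ioi 0 := Ioo_union_Ici_eq_Ioi zero_lt_one
        rw [← hsplit]
        have hdisj : Disjoint (Ioo (0:ℝ) 1) (Ici 1) :=
          Set.disjoint_left.mpr fun r hr hr' => absurd hr' (not_le.mpr hr.2)
        have hmarg : IntegrableOn (fun r => ∫ θ in Ioo (-Real.pi) Real.pi, F (r, θ))
            (Ioo (0:ℝ) 1) := by
          have h2 := hIntQ
          rw [hQdef, IntegrableOn, Measure.volume_eq_prod, ← Measure.prod_restrict] at h2
          exact h2.integral_prod_left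
        have hzero : EqOn (fun r => ∫ θ in Ioo (-Real.pi) Real.pi, F (r, θ)) 0 (Ici (1:ℝ)) := by
          intro r hr
          have hFz : ∀ θ, F (r, θ) = 0 := by
            intro θ
            have hGz' : G (ψ (r, θ)) = 0 := by
              apply hGz
              rw [hψnorm]
              simp only
              rw [abs_of_pos (lt_of_lt_of_le zero_lt_one hr)]
              exact hr
            simp [hFdef, hGz']
          simp [hFz]
        have hzint : IntegrableOn (fun r => ∫ θ in Ioo (-Real.pi) Real.pi, F (r, θ))
            (Ici (1:ℝ)) := by
          rw [integrableOn_congr_fun hzero measurableSet_Ici]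
          exact integrableOn_zero
        rw [setIntegral_union hdisj measurableSet_Ici hmarg hzint,
          setIntegral_congr_fun measurableSet_Ici hzero]
        simp
    _ = ∫ r in Ioo (0:ℝ) 1, (j:ℝ) * r ^ (2*m+1) * K (r ^ j) := by
        apply setIntegral_congr_fun measurableSet_Ioo
        intro r hr
        have hrpos : (0:ℝ) < r := hr.1
        have hmem : ∀ θ : ℝ, ψ (r, θ) ∈ ball (0:ℂ) 1 := by
          intro θ
          rw [mem_ball_zero_iff, hψnorm]
          simpa [abs_of_pos hrpos] using hr.2
        have hψpow : ∀ θ : ℝ, (ψ (r, θ)) ^ j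
            = ((r ^ j : ℝ) : ℂ) * Complex.exp ((((j:ℝ) * θ : ℝ)) * Complex.I) := by
          intro θ
          simp only [hψdef]
          rw [mul_pow, ← Complex.exp_nat_mul]
          push_cast
          rw [mul_assoc]
        have hpoint : ∀ θ : ℝ, F (r, θ) = (j:ℝ) * r ^ (2*m+1) *
            f (((r ^ j : ℝ) : ℂ) * Complex.exp ((((j:ℝ) * θ : ℝ)) * Complex.I)) := by
          intro θ
          simp only [hFdef]
          rw [hG, indicator_of_mem (hmem θ), hgdef]
          simp only [hψpow θ, hψnorm, smul_eq_mul]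
          rw [abs_of_pos hrpos, hjm]
          ring
        calc (∫ θ in Ioo (-Real.pi) Real.pi, F (r, θ))
            = ∫ θ in Ioo (-Real.pi) Real.pi, (j:ℝ) * r ^ (2*m+1) *
                f (((r ^ j : ℝ) : ℂ) * Complex.exp ((((j:ℝ) * θ : ℝ)) * Complex.I)) := by
              simp_rw [hpoint]
          _ = ∫ θ in (-Real.pi)..Real.pi, (j:ℝ) * r ^ (2*m+1) *
                f (((r ^ j : ℝ) : ℂ) * Complex.exp ((((j:ℝ) * θ : ℝ)) * Complex.I)) := by
              rw [intervalIntegral.integral_of_le (by linarith [Real.pi_pos]),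
                integral_Ioc_eq_integral_Ioo]
          _ = (j:ℝ) * r ^ (2*m+1) * ∫ θ in (-Real.pi)..Real.pi,
                f (((r ^ j : ℝ) : ℂ) * Complex.exp ((((j:ℝ) * θ : ℝ)) * Complex.I)) := by
              rw [← intervalIntegral.integral_const_mul]
          _ = (j:ℝ) * r ^ (2*m+1) * K (r ^ j) := by
              rw [periodic_avg j hj f hf (r ^ j), hK]
    _ = ∫ r in (0:ℝ)..1, (j:ℝ) * r ^ (2*m+1) * K (r ^ j) := by
        rw [intervalIntegral.integral_of_le zero_le_one, integral_Ioc_eq_integral_Ioo]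
    _ = ∫ s in (0:ℝ)..1, s * K s := by
        have hsub := intervalIntegral.integral_comp_smul_deriv (a := (0:ℝ)) (b := 1)
          (f := fun r => r ^ j) (f' := fun r => (j:ℝ) * r ^ (j-1))
          (g := fun s => s * K s)
          (fun x _ => hasDerivAt_pow j x)
          ((continuous_const.mul (continuous_pow _)).continuousOn)
          (continuous_id.mul hKc)
        simp only [Function.comp_apply] at hsub
        rw [zero_pow (by omega : j ≠ 0), one_pow] at hsub
        rw [← hsub]
        apply intervalIntegral.integral_congr
        intro r _
        simp only [smul_eq_mul, hjm, hjdef, Nat.add_sub_cancel]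
        ring

lemma deriv_norm_sq_eq (j : ℕ) (hj : 1 ≤ j) (ζ : ℂ) (u : ℂ → ℝ) (hu : ContDiff ℝ 1 u) (z : ℂ) :
    ‖fderiv ℝ (fun w : ℂ => ((j : ℝ)) ^ (-(1:ℝ)/2) * u (ζ + w ^ j)) z‖ ^ 2
      = (j:ℝ) * ‖z‖ ^ (2*(j-1)) * ‖fderiv ℝ u (ζ + z ^ j)‖ ^ 2 := by
  have hφ : HasFDerivAt (fun w : ℂ => ζ + w ^ j) (mulC ((j:ℂ) * z ^ (j-1))) z := by
    have h := ((hasDerivAt_pow j z).const_add ζ)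
    exact (hasDerivAt_iff_hasFDerivAt.mp h).restrictScalars ℝ
  have hT : HasFDerivAt u (fderiv ℝ u (ζ + z ^ j)) (ζ + z ^ j) :=
    ((hu.differentiable one_ne_zero) (ζ + z ^ j)).hasFDerivAt
  have hcomp : HasFDerivAt (fun w : ℂ => u (ζ + w ^ j))
      ((fderiv ℝ u (ζ + z ^ j)).comp (mulC ((j:ℂ) * z ^ (j-1)))) z := hT.comp z hφ
  have hmain : HasFDerivAt (fun w : ℂ => ((j : ℝ)) ^ (-(1:ℝ)/2) * u (ζ + w ^ j))
      (((j : ℝ)) ^ (-(1:ℝ)/2) • ((fderiv ℝ u (ζ + z ^ j)).comp (mulC ((j:ℂ) * z ^ (j-1))))) z :=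
    hcomp.const_mul _
  rw [hmain.fderiv, norm_smul, norm_comp_mulC]
  have hjpos : (0:ℝ) < (j:ℝ) := by exact_mod_cast Nat.pos_of_ne_zero (by omega)
  have hc : ‖((j : ℝ)) ^ (-(1:ℝ)/2)‖ = ((j : ℝ)) ^ (-(1:ℝ)/2) :=
    Real.norm_of_nonneg (Real.rpow_nonneg hjpos.le _)
  have hd : ‖(j:ℂ) * z ^ (j-1)‖ = (j:ℝ) * ‖z‖ ^ (j-1) := by
    rw [norm_mul, norm_pow, Complex.norm_natCast]
  rw [hc, hd]
  have hc2 : (((j : ℝ)) ^ (-(1:ℝ)/2)) ^ 2 = (j:ℝ)⁻¹ := by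
    rw [← Real.rpow_natCast (((j : ℝ)) ^ (-(1:ℝ)/2)) 2, ← Real.rpow_mul hjpos.le]
    norm_num
    rw [Real.rpow_neg_one]
  have hpow : (‖z‖ ^ (j-1)) ^ 2 = ‖z‖ ^ (2*(j-1)) := by rw [← pow_mul, mul_comm]
  rw [mul_pow, mul_pow, mul_pow, hc2, hpow]
  field_simp

/-- The operator `(g_{j,ζ} u)(z) = j^{-1/2} u(ζ + z^j)` (with `z^j` the complex power) is an
isometry from `H^1_0(Ω)` to `H^1_0(B)` for the gradient `L²` norm, for `Ω ⊆ B_{1/2} ⊆ ℂ`,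
`ζ ∈ closure Ω`, `j ≥ 1` and `u` supported in `Ω` (extended by zero):
`‖∇(g_{j,ζ}u)‖_{L²(B)} = ‖∇u‖_{L²(Ω)}`. -/
theorem g_op_isometry (j : ℕ) (hj : 1 ≤ j)
    (Ω : Set ℂ) (hΩ : Ω ⊆ ball (0 : ℂ) (1/2)) (ζ : ℂ) (hζ : ζ ∈ closure Ω)
    (u : ℂ → ℝ) (hu : ContDiff ℝ 1 u) (hsupp : tsupport u ⊆ Ω) :
    ∫ z in ball (0 : ℂ) 1,
        ‖fderiv ℝ (fun w : ℂ => ((j : ℝ)) ^ (-(1:ℝ)/2) * u (ζ + w ^ j)) z‖ ^ 2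
      = ∫ z : ℂ, ‖fderiv ℝ u z‖ ^ 2 := by
  have hζ2 : ‖ζ‖ ≤ 1/2 := by
    have h1 := closure_mono hΩ hζ
    rw [closure_ball (0:ℂ) (by norm_num : (1/2:ℝ) ≠ 0)] at h1
    simpa [mem_closedBall, dist_zero_right] using h1
  set v : ℂ → ℝ := fun w => ‖fderiv ℝ u w‖ ^ 2 with hv
  set f : ℂ → ℝ := fun w => v (ζ + w) with hfdef
  have hf : Continuous f := by
    have h1 : Continuous (fderiv ℝ u) := hu.continuous_fderiv one_ne_zero
    exact ((h1.comp (continuous_const.add continuous_id)).norm).pow 2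
  have hfsupp : ∀ w : ℂ, 1 ≤ ‖w‖ → f w = 0 := by
    intro w hw
    have hz : fderiv ℝ u (ζ + w) = 0 := by
      by_contra h
      have hmem : (ζ + w) ∈ tsupport u := by
        apply support_fderiv_subset (𝕜 := ℝ)
        rw [Function.mem_support]
        exact h
      have h2 := hΩ (hsupp hmem)
      rw [mem_ball_zero_iff] at h2
      have h3 : ‖w‖ < 1 := by
        calc ‖w‖ = ‖(ζ + w) - ζ‖ := by ring_nf
          _ ≤ ‖ζ + w‖ + ‖ζ‖ := norm_sub_le _ _
          _ < 1 := by linarith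
      linarith
    simp [hfdef, hv, hz]
  have hpa := polar_pow_integral j hj f hf hfsupp
  have hpb := polar_pow_integral 1 le_rfl f hf hfsupp
  calc (∫ z in ball (0 : ℂ) 1,
        ‖fderiv ℝ (fun w : ℂ => ((j : ℝ)) ^ (-(1:ℝ)/2) * u (ζ + w ^ j)) z‖ ^ 2)
      = ∫ z in ball (0:ℂ) 1, (j:ℝ) * ‖z‖ ^ (2*(j-1)) * f (z ^ j) :=
        setIntegral_congr_fun measurableSet_ball
          (fun z _ => deriv_norm_sq_eq j hj ζ u hu z)
    _ = ∫ t in (0:ℝ)..1, t * ∫ θ in (-Real.pi)..Real.pi,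
          f ((t:ℂ) * Complex.exp ((θ:ℝ) * Complex.I)) := hpa
    _ = ∫ z in ball (0:ℂ) 1, ((1:ℕ):ℝ) * ‖z‖ ^ (2*(1-1)) * f (z ^ 1) := hpb.symm
    _ = ∫ z in ball (0:ℂ) 1, f z := by simp
    _ = ∫ z, f z := setIntegral_eq_integral_of_forall_compl_eq_zero
        (fun z hz => hfsupp z (by rwa [mem_ball_zero_iff, not_lt] at hz))
    _ = ∫ z, v z := by
        rw [hfdef]
        exact integral_add_left_eq_self v ζ
    _ = ∫ z : ℂ, ‖fderiv ℝ u z‖ ^ 2 := rfl
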